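/- Let R be a commutative ring, q, m, r ∈ R, A an associative unital R-algebra, and a, b ∈ A satisfying the q-commutation relation a*b - q•(b*a) = 1. Then for all natural numbers n and ℓ: (m•(b*a) + r•1)^{n+ℓ} = \sum_{j=0}^{ℓ} \sum_{k=0}^{n} (m^{j+k} * W_{m,r,q}(ℓ,j) * C(n,k) * (m[j]_q + r)^{n-k} * q^{j*k}) • (b^j * (b*a)^k * a^j). -/

import Mathlib

/-- The q-integer [n]_q. -/
def qInt {R : Type*} [CommRing R] (q : R) (n : ℕ) : R :=
  ∑ i ∈ Finset.range n, q ^ i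


/-- The (q,r)-Whitney numbers of the second kind. -/
def qWhitney {R : Type*} [CommRing R] (q m r : R) : ℕ → ℕ → R
  | 0, 0 => 1
  | 0, _ + 1 => 0
  | n + 1, 0 => r * qWhitney q m r n 0
  | n + 1, k + 1 =>
      q ^ k * qWhitney q m r n k + (m * qInt q (k + 1) + r) * qWhitney q m r n (k + 1)

section Aux
variable {R : Type*} [CommRing R] (q m r : R) {A : Type*} [Ring A] [Algebra R A]

lemma qInt_zero : qInt q 0 = 0 := by simp [qInt]
lemma qInt_succ (n : ℕ) : qInt q (n + 1) = qInt q n + q ^ n := by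
  simp [qInt, Finset.sum_range_succ]

lemma qWhitney_eq_zero : ∀ n k, n < k → qWhitney q m r n k = 0
  | 0, k + 1, _ => rfl
  | n + 1, k + 1, h => by
    rw [qWhitney, qWhitney_eq_zero n k (by omega), qWhitney_eq_zero n (k+1) (by omega)]
    ring

variable (a b : A) (h : a * b - q • (b * a) = 1)

include h in
lemma Nb : (b * a) * b = b * (q • (b * a) + 1) := by
  have hab : a * b = q • (b * a) + 1 := by
    have := sub_eq_iff_eq_add.mp h; rw [this]; abel
  rw [mul_assoc, hab]

include h in
lemma Nbj (j : ℕ) : (b * a) * b ^ j = b ^ j * (q ^ j • (b * a) + qInt q j • 1) := by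
  induction j with
  | zero => simp [qInt_zero]
  | succ j ih =>
    rw [pow_succ, ← mul_assoc, ih, mul_assoc, add_mul, smul_mul_assoc, smul_mul_assoc,
      one_mul, Nb q a b h, qInt_succ, pow_succ]
    simp only [add_mul, smul_mul_assoc, mul_add, mul_smul_comm, mul_one, smul_add,
      smul_smul, mul_assoc, add_smul]
    abel

include h in
lemma Xbj (j : ℕ) : (m • (b * a) + r • (1 : A)) * b ^ j
    = b ^ j * ((m * q ^ j) • (b * a) + (m * qInt q j + r) • 1) := by
  rw [add_mul, smul_mul_assoc, smul_mul_assoc, one_mul, Nbj q a b h j]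
  simp only [smul_add, smul_smul, mul_add, mul_smul_comm, mul_one, add_smul]
  abel

include h in
lemma Xnbj (n j : ℕ) : (m • (b * a) + r • (1 : A)) ^ n * b ^ j
    = b ^ j * ((m * q ^ j) • (b * a) + (m * qInt q j + r) • 1) ^ n := by
  induction n with
  | zero => simp
  | succ n ih =>
    rw [pow_succ', mul_assoc, ih, ← mul_assoc, Xbj q m r a b h j, mul_assoc, ← pow_succ']

lemma binom (c d : R) (n : ℕ) : (c • (b * a) + d • (1 : A)) ^ n
    = ∑ k ∈ Finset.range (n + 1),
        ((n.choose k : R) * c ^ k * d ^ (n - k)) • (b * a) ^ k := by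
  have hc : Commute (c • (b * a)) (d • (1 : A)) := by
    simp [Commute, SemiconjBy, smul_mul_assoc, mul_smul_comm, smul_smul, mul_comm]
  rw [hc.add_pow]
  apply Finset.sum_congr rfl
  intro k _
  rw [smul_pow, smul_pow, one_pow, smul_mul_assoc, mul_smul_comm, mul_one, smul_smul,
    ← nsmul_eq_mul', ← Nat.cast_smul_eq_nsmul R, smul_smul]
  congr 1
  ring

include h in
lemma Xtj (j : ℕ) : (m • (b * a) + r • (1 : A)) * (b ^ j * a ^ j)
    = (m * q ^ j) • (b ^ (j + 1) * a ^ (j + 1)) + (m * qInt q j + r) • (b ^ j * a ^ j) := by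
  rw [← mul_assoc, Xbj q m r a b h j, mul_assoc, add_mul, smul_mul_assoc, smul_mul_assoc,
    one_mul, mul_add, mul_smul_comm, mul_smul_comm]
  congr 2
  rw [pow_succ, pow_succ']
  simp [mul_assoc]

include h in
lemma ellsum (ℓ : ℕ) : (m • (b * a) + r • (1 : A)) ^ ℓ
    = ∑ j ∈ Finset.range (ℓ + 1), (m ^ j * qWhitney q m r ℓ j) • (b ^ j * a ^ j) := by
  induction ℓ with
  | zero => simp [qWhitney]
  | succ ℓ ih =>
    rw [pow_succ', ih, Finset.mul_sum]
    simp only [mul_smul_comm, Xtj q m r a b h, smul_add, smul_smul]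
    rw [Finset.sum_add_distrib]
    have hS2 : ∑ j ∈ Finset.range (ℓ + 1),
        (m ^ j * qWhitney q m r ℓ j * (m * qInt q j + r)) • (b ^ j * a ^ j)
        = (qWhitney q m r ℓ 0 * r) • (b ^ 0 * a ^ 0)
          + ∑ j ∈ Finset.range (ℓ + 1),
            (m ^ (j + 1) * qWhitney q m r ℓ (j + 1) * (m * qInt q (j + 1) + r)) •
              (b ^ (j + 1) * a ^ (j + 1)) := by
      rw [Finset.sum_range_succ' (fun j =>
        (m ^ j * qWhitney q m r ℓ j * (m * qInt q j + r)) • (b ^ j * a ^ j)) ℓ]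
      rw [Finset.sum_range_succ, qWhitney_eq_zero q m r ℓ (ℓ + 1) (by omega)]
      simp [qInt_zero, add_comm]
    rw [hS2, Finset.sum_range_succ' (fun j =>
      (m ^ j * qWhitney q m r (ℓ + 1) j) • (b ^ j * a ^ j)) (ℓ + 1)]
    have hcomb : ∑ j ∈ Finset.range (ℓ + 1),
        (m ^ (j + 1) * qWhitney q m r (ℓ + 1) (j + 1)) • (b ^ (j + 1) * a ^ (j + 1))
        = ∑ j ∈ Finset.range (ℓ + 1),
          ((m ^ (j + 1) * qWhitney q m r ℓ (j + 1) * (m * qInt q (j + 1) + r)) •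
              (b ^ (j + 1) * a ^ (j + 1))
            + (m ^ j * qWhitney q m r ℓ j * (m * q ^ j)) • (b ^ (j + 1) * a ^ (j + 1))) := by
      apply Finset.sum_congr rfl
      intro j _
      rw [← add_smul]
      congr 1
      show m ^ (j + 1) * (q ^ j * qWhitney q m r ℓ j
        + (m * qInt q (j + 1) + r) * qWhitney q m r ℓ (j + 1)) = _
      ring
    rw [hcomb, Finset.sum_add_distrib]
    have hc0 : (m ^ 0 * qWhitney q m r (ℓ + 1) 0) • ((b : A) ^ 0 * a ^ 0)
        = (qWhitney q m r ℓ 0 * r) • ((b : A) ^ 0 * a ^ 0) := by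
      show (m ^ 0 * (r * qWhitney q m r ℓ 0)) • _ = _
      congr 1
      ring
    rw [hc0]
    abel

include h in
theorem qBoson_whitney_spivey_operator' (n ℓ : ℕ) :
    (m • (b * a) + r • (1 : A)) ^ (n + ℓ) =
      ∑ j ∈ Finset.range (ℓ + 1), ∑ k ∈ Finset.range (n + 1),
        (m ^ (j + k) * qWhitney q m r ℓ j * (Nat.choose n k : R) *
            (m * qInt q j + r) ^ (n - k) * q ^ (j * k)) •
          (b ^ j * (b * a) ^ k * a ^ j) := by
  rw [pow_add, ellsum q m r a b h ℓ, Finset.mul_sum]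
  apply Finset.sum_congr rfl
  intro j _
  rw [mul_smul_comm, ← mul_assoc, Xnbj q m r a b h n j,
    binom a b (m * q ^ j) (m * qInt q j + r) n,
    Finset.mul_sum, Finset.sum_mul, Finset.smul_sum]
  apply Finset.sum_congr rfl
  intro k _
  rw [mul_smul_comm, smul_mul_assoc, smul_smul]
  congr 1
  ring

end Aux

/-- Operator form of the generalized Spivey formula for (q,r)-Whitney numbers. -/
theorem qBoson_whitney_spivey_operator {R : Type*} [CommRing R] (q m r : R)
    {A : Type*} [Ring A] [Algebra R A] (a b : A) (h : a * b - q • (b * a) = 1)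
    (n ℓ : ℕ) :
    (m • (b * a) + r • (1 : A)) ^ (n + ℓ) =
      ∑ j ∈ Finset.range (ℓ + 1), ∑ k ∈ Finset.range (n + 1),
        (m ^ (j + k) * qWhitney q m r ℓ j * (Nat.choose n k : R) *
            (m * qInt q j + r) ^ (n - k) * q ^ (j * k)) •
          (b ^ j * (b * a) ^ k * a ^ j) :=
  qBoson_whitney_spivey_operator' q m r a b h n ℓ
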